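/- Let Γ : ℝ≥0^n → ℝ≥0^n be a MAX-preserving map, built from non-decreasing functions γ_{i,j} with γ_{i,j}(0)=0 via Γ_i(x)=max_j γ_{i,j}(x_j), satisfying the cyclic small-gain conditions. If x, y ∈ ℝ≥0^n satisfy x ≤ MAX{y, Γ(x)} (componentwise), then x ≤ Q(y), where Q(y) = MAX{y, Γ(y), Γ^(2)(y), …, Γ^(n-1)(y)}. -/

import Mathlib

open scoped NNReal

/-- The composition `γ_{i₁,i₂} ∘ γ_{i₂,i₃} ∘ ⋯ ∘ γ_{i_r,i₁}` along the cycle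
given by the list `l = [i₁, …, i_r]`. -/
def cycleGain {n : ℕ} (γ : Fin n → Fin n → ℝ≥0 → ℝ≥0) (l : List (Fin n)) :
    ℝ≥0 → ℝ≥0 :=
  ((l.zip (l.rotate 1)).map fun p => γ p.1 p.2).foldr (· ∘ ·) id

/-- `γ` satisfies the cyclic small-gain conditions: the gain along every cycle of
pairwise distinct indices (including the trivial cycles `γ_{i,i}`) is strictly
below the identity on `(0,∞)`. -/
def CyclicSmallGain {n : ℕ} (γ : Fin n → Fin n → ℝ≥0 → ℝ≥0) : Prop :=
  ∀ l : List (Fin n), l.Nodup → l ≠ [] → ∀ s : ℝ≥0, 0 < s → cycleGain γ l s < s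

namespace SGAux

variable {n : ℕ}

/-- Gain along a path `[i₀, …, i_k]`: `γ_{i₀ i₁} ∘ ⋯ ∘ γ_{i_{k-1} i_k}`. -/
def pathGain (γ : Fin n → Fin n → ℝ≥0 → ℝ≥0) : List (Fin n) → ℝ≥0 → ℝ≥0
  | [] => id
  | [_] => id
  | a :: b :: t => γ a b ∘ pathGain γ (b :: t)

lemma pathGain_mono (γ : Fin n → Fin n → ℝ≥0 → ℝ≥0)
    (hmono : ∀ i j, Monotone (γ i j)) :
    ∀ l, Monotone (pathGain γ l)
  | [] => monotone_id
  | [_] => monotone_id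
  | a :: b :: t => (hmono a b).comp (pathGain_mono γ hmono (b :: t))

lemma foldr_zip_eq (γ : Fin n → Fin n → ℝ≥0 → ℝ≥0) :
    ∀ (t : List (Fin n)) (a b : Fin n),
      (((a :: t).zip (t ++ [b])).map fun p => γ p.1 p.2).foldr (· ∘ ·) id
        = pathGain γ (a :: (t ++ [b]))
  | [], a, b => by simp [pathGain]
  | c :: t, a, b => by
    have h := foldr_zip_eq γ t c b
    simp only [List.cons_append, List.zip_cons_cons, List.map_cons, List.foldr_cons] at h ⊢
    rw [h]
    rfl

lemma cycleGain_eq_pathGain (γ : Fin n → Fin n → ℝ≥0 → ℝ≥0) (a : Fin n)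
    (t : List (Fin n)) :
    cycleGain γ (a :: t) = pathGain γ ((a :: t) ++ [a]) := by
  have : (a :: t).rotate 1 = t ++ [a] := by
    rw [show (1 : ℕ) = 0 + 1 from rfl, List.rotate_cons_succ, List.rotate_zero]
  rw [cycleGain, this, foldr_zip_eq]
  rfl

lemma chain_le_pathGain (γ : Fin n → Fin n → ℝ≥0 → ℝ≥0)
    (hmono : ∀ i j, Monotone (γ i j)) (x : Fin n → ℝ≥0) :
    ∀ (l : List (Fin n)) (h : l ≠ []),
      List.Chain' (fun p q => x p ≤ γ p q (x q)) l →
      x (l.head h) ≤ pathGain γ l (x (l.getLast h))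
  | [], h, _ => absurd rfl h
  | [a], _, _ => le_refl _
  | a :: b :: t, _, hc => by
    have h1 : x a ≤ γ a b (x b) := hc.rel_head
    have h2 := chain_le_pathGain γ hmono x (b :: t) (by simp) hc.tail
    calc x a ≤ γ a b (x b) := h1
      _ ≤ γ a b (pathGain γ (b :: t) (x ((b :: t).getLast (by simp)))) :=
        hmono a b h2
      _ = pathGain γ (a :: b :: t) (x ((a :: b :: t).getLast (by simp))) := by
        rw [show (a :: b :: t).getLast (by simp) = (b :: t).getLast (by simp) from
          List.getLast_cons (by simp)]
        rfl

lemma pathGain_le_iterate (γ : Fin n → Fin n → ℝ≥0 → ℝ≥0)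
    (hmono : ∀ i j, Monotone (γ i j))
    (Γ : (Fin n → ℝ≥0) → (Fin n → ℝ≥0))
    (hΓ : ∀ x i, Γ x i = Finset.univ.sup fun j : Fin n => γ i j (x j))
    (y : Fin n → ℝ≥0) :
    ∀ (l : List (Fin n)) (h : l ≠ []),
      pathGain γ l (y (l.getLast h)) ≤ Γ^[l.length - 1] y (l.head h)
  | [], h => absurd rfl h
  | [a], _ => le_refl _
  | a :: b :: t, _ => by
    have h2 := pathGain_le_iterate γ hmono Γ hΓ y (b :: t) (by simp)
    have hlast : (a :: b :: t).getLast (by simp) = (b :: t).getLast (by simp) :=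
      List.getLast_cons (by simp)
    have hlen : (b :: t).length - 1 = t.length := by simp
    calc pathGain γ (a :: b :: t) (y ((a :: b :: t).getLast (by simp)))
        = γ a b (pathGain γ (b :: t) (y ((b :: t).getLast (by simp)))) := by
          rw [hlast]; rfl
      _ ≤ γ a b (Γ^[(b :: t).length - 1] y b) := hmono a b h2
      _ ≤ Finset.univ.sup (fun j : Fin n => γ a j ((Γ^[t.length] y) j)) := by
          rw [hlen]
          exact Finset.le_sup (f := fun j : Fin n => γ a j (Γ^[t.length] y j))
            (Finset.mem_univ b)
      _ = Γ (Γ^[t.length] y) a := (hΓ _ _).symm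
      _ = Γ^[(a :: b :: t).length - 1] y a := by
          rw [show (a :: b :: t).length - 1 = t.length + 1 by simp,
            Function.iterate_succ_apply']

end SGAux

theorem le_Q_of_le_max_gamma {n : ℕ} (hn : 0 < n)
    (γ : Fin n → Fin n → ℝ≥0 → ℝ≥0)
    (hmono : ∀ i j, Monotone (γ i j)) (hzero : ∀ i j, γ i j 0 = 0)
    (Γ : (Fin n → ℝ≥0) → (Fin n → ℝ≥0))
    (hΓ : ∀ x i, Γ x i = Finset.univ.sup fun j : Fin n => γ i j (x j))
    (hsg : CyclicSmallGain γ)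
    (Q : (Fin n → ℝ≥0) → (Fin n → ℝ≥0))
    (hQ : ∀ z, Q z = (Finset.range n).sup fun k => Γ^[k] z)
    (x y : Fin n → ℝ≥0) (hxy : x ≤ y ⊔ Γ x) :
    x ≤ Q y := by
  haveI : Nonempty (Fin n) := Fin.pos_iff_nonempty.mp hn
  by_contra hcon
  rw [Pi.le_def] at hcon
  push_neg at hcon
  obtain ⟨i₀, hi₀⟩ := hcon
  set R : Fin n → Fin n → Prop := fun p q => x p ≤ γ p q (x q) with hR
  -- key inductive claim
  have key : ∀ (m : ℕ) (l : List (Fin n)) (hne : l ≠ []),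
      l.Nodup → List.Chain' R l → l.head hne = i₀ → n + 1 - l.length ≤ m → False := by
    intro m
    induction m with
    | zero =>
      intro l hne hnd _ _ hlen
      have := hnd.length_le_card
      simp [Fintype.card_fin] at this
      omega
    | succ m ih =>
      intro l hne hnd hch hhead hlen
      have hlenn : l.length ≤ n := by
        have := hnd.length_le_card; simpa [Fintype.card_fin] using this
      have hlpos : 0 < l.length := List.length_pos_iff.mpr hne
      set last := l.getLast hne with hlast
      -- x i₀ ≤ pathGain l (x last)
      have hxchain : x i₀ ≤ SGAux.pathGain γ l (x last) := by
        rw [← hhead]; exact SGAux.chain_le_pathGain γ hmono x l hne hch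
      -- y last < x last
      have hylast : y last < x last := by
        by_contra hyl
        push_neg at hyl
        have h1 : x i₀ ≤ SGAux.pathGain γ l (y last) :=
          hxchain.trans (SGAux.pathGain_mono γ hmono l hyl)
        have h2 : SGAux.pathGain γ l (y last) ≤ Γ^[l.length - 1] y i₀ := by
          rw [← hhead]; exact SGAux.pathGain_le_iterate γ hmono Γ hΓ y l hne
        have h3 : Γ^[l.length - 1] y i₀ ≤ Q y i₀ := by
          rw [hQ, Finset.sup_apply]
          exact Finset.le_sup (f := fun k => Γ^[k] y i₀)
            (Finset.mem_range.mpr (by omega))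
        exact absurd ((h1.trans h2).trans h3) (not_le.mpr hi₀)
      have hxlastpos : 0 < x last := lt_of_le_of_lt bot_le hylast
      -- x last ≤ Γ x last, pick a maximizer j'
      have hxle : x last ≤ Γ x last := by
        have h := hxy last
        rw [Pi.sup_apply] at h
        rcases le_sup_iff.mp h with h' | h'
        · exact absurd h' (not_le.mpr hylast)
        · exact h'
      obtain ⟨j', -, hj'⟩ := Finset.exists_mem_eq_sup Finset.univ
        Finset.univ_nonempty (fun j => γ last j (x j))
      have hlink : x last ≤ γ last j' (x j') := by
        have := hxle
        rw [hΓ] at this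
        exact this.trans_eq hj'
      have hxj'pos : 0 < x j' := by
        rcases Nat.eq_zero_or_pos 1 with _ | _
        · omega
        · by_contra h0
          push_neg at h0
          have : x j' = 0 := le_antisymm h0 bot_le
          rw [this, hzero] at hlink
          exact absurd hlink (not_le.mpr hxlastpos)
      by_cases hmem : j' ∈ l
      · -- cycle case
        obtain ⟨u, v, huv⟩ := List.append_of_mem hmem
        set c : List (Fin n) := j' :: v with hc
        have hcnd : c.Nodup := by
          have hsub : List.Sublist c l := huv ▸ (List.sublist_append_right u c)
          exact hsub.nodup hnd
        have hcch : List.Chain' R c := by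
          have : List.Chain' R (u ++ c) := huv ▸ hch
          exact (List.isChain_append.mp this).2.1
        have hclast : c.getLast (by simp [hc]) = last := by
          have h1 : l.getLast? = some last := List.getLast?_eq_getLast hne
          have h2 : c.getLast? = some (c.getLast (by simp [hc])) :=
            List.getLast?_eq_getLast _
          have h3 : l.getLast? = c.getLast? := by
            rw [huv, List.getLast?_append_of_ne_nil u (by simp [hc])]
          rw [h3, h2] at h1
          exact Option.some_injective _ h1
        -- chain on c ++ [j']
        have hcch' : List.Chain' R (c ++ [j']) := by
          apply List.isChain_append.mpr
          refine ⟨hcch, List.isChain_singleton _, ?_⟩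
          intro p hp q hq
          rw [List.getLast?_eq_getLast (l := c) (by simp [hc])] at hp
          simp only [List.head?_cons, Option.mem_def, Option.some.injEq] at hp hq
          rw [← hp, ← hq] at *
          rw [hclast]
          exact hlink
        have hhead' : (c ++ [j']).head (by simp [hc]) = j' := by simp [hc]
        have hlast' : (c ++ [j']).getLast (by simp) = j' := by
          rw [List.getLast_append_of_ne_nil _ (by simp)]
          rfl
        have hxc : x j' ≤ SGAux.pathGain γ (c ++ [j']) (x j') := by
          have := SGAux.chain_le_pathGain γ hmono x (c ++ [j']) (by simp [hc]) hcch'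
          rwa [hhead', hlast'] at this
        have hcyc : cycleGain γ c (x j') < x j' :=
          hsg c hcnd (by simp [hc]) (x j') hxj'pos
        rw [SGAux.cycleGain_eq_pathGain] at hcyc
        exact absurd (hxc.trans_lt hcyc) (lt_irrefl _)
      · -- extension case
        have hne' : l ++ [j'] ≠ [] := by simp
        have hnd' : (l ++ [j']).Nodup := by
          simp [List.nodup_append, hnd, hmem]
          rintro a ha rfl
          exact hmem ha
        have hch' : List.Chain' R (l ++ [j']) := by
          apply List.isChain_append.mpr
          refine ⟨hch, List.isChain_singleton _, ?_⟩
          intro p hp q hq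
          rw [List.getLast?_eq_getLast hne] at hp
          simp only [List.head?_cons, Option.mem_def, Option.some.injEq] at hp hq
          rw [← hp, ← hq]
          exact hlink
        have hhead' : (l ++ [j']).head hne' = i₀ := by
          rw [← hhead]
          cases l with
          | nil => exact absurd rfl hne
          | cons a t => rfl
        refine ih (l ++ [j']) hne' hnd' hch' hhead' ?_
        rw [List.length_append]
        simp only [List.length_singleton]
        omega
  exact key (n + 1) [i₀] (by simp) (by simp) (List.isChain_singleton _) rfl (by simp)
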